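/- Let 1 ≤ p < ∞, R be monotone, and v be a weight on Y of the form v = h*_R for some function h on X. If for all measurable functions f on X the saturation property sup{∫_X |f h| dμ : h measurable with h*_R = v} = ∫_Y f*_R v dν holds, then ‖·‖_{Λ^p_R(v)} satisfies the triangle inequality ‖f + g‖_{Λ^p_R(v)} ≤ ‖f‖_{Λ^p_R(v)} + ‖g‖_{Λ^p_R(v)}. -/

import Mathlib

open MeasureTheory Set Filter
open scoped ENNReal NNReal

/-- The rearrangement of `f` with respect to the set transformation `R`. -/
noncomputable def rearr {X Y : Type*} (R : Set X → Set Y) (f : X → ℝ) (y : Y) : ℝ≥0∞ :=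
  ∫⁻ t in Set.Ioi (0 : ℝ), (R {x | t < |f x|}).indicator (fun _ => (1 : ℝ≥0∞)) y

/-- The Lorentz space functional `‖f‖_{Λ^p_R(v)} = (∫_Y (f*_R)^p v dν)^{1/p}`. -/
noncomputable def lorentzNorm {X Y : Type*} [MeasurableSpace Y]
    (R : Set X → Set Y) (ν : Measure Y) (v : Y → ℝ≥0∞) (p : ℝ) (f : X → ℝ) : ℝ≥0∞ :=
  (∫⁻ y, rearr R f y ^ p * v y ∂ν) ^ (1 / p)

/-- Classification of downward-closed subsets of `ℝ` intersected with `Ioi 0`. -/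
lemma classify_lower (S : Set ℝ) (hS : ∀ ⦃s t : ℝ⦄, s ≤ t → t ∈ S → s ∈ S) :
    S ∩ Set.Ioi 0 = Set.Ioi 0 ∨
      ∃ b : ℝ, 0 ≤ b ∧ Set.Ioo 0 b ⊆ S ∩ Set.Ioi 0 ∧ S ∩ Set.Ioi 0 ⊆ Set.Ioc 0 b := by
  by_cases hbdd : BddAbove (S ∩ Set.Ioi 0)
  · right
    rcases (S ∩ Set.Ioi 0).eq_empty_or_nonempty with he | hne
    · refine ⟨0, le_rfl, ?_, ?_⟩
      · rw [Set.Ioo_self]; exact Set.empty_subset _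
      · rw [he]; exact Set.empty_subset _
    · obtain ⟨u, hu⟩ := hne
      have hb : 0 ≤ sSup (S ∩ Set.Ioi 0) := le_trans (le_of_lt hu.2) (le_csSup hbdd hu)
      refine ⟨sSup (S ∩ Set.Ioi 0), hb, ?_, ?_⟩
      · rintro t ⟨ht0, htb⟩
        obtain ⟨u', hu', htu'⟩ := exists_lt_of_lt_csSup ⟨u, hu⟩ htb
        exact ⟨hS htu'.le hu'.1, ht0⟩
      · intro t ht; exact ⟨ht.2, le_csSup hbdd ht⟩
  · left
    ext t
    constructor
    · exact fun ht => ht.2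
    · intro ht
      have hex : ∃ u ∈ S ∩ Set.Ioi 0, t < u := by
        by_contra hcon
        push_neg at hcon
        exact hbdd ⟨t, fun u hu => hcon u hu⟩
      obtain ⟨u, hu, htu⟩ := hex
      exact ⟨hS htu.le hu.1, ht⟩

lemma vol_squeeze {A : Set ℝ} {b : ℝ}
    (h1 : Set.Ioo 0 b ⊆ A) (h2 : A ⊆ Set.Ioc 0 b) :
    MeasureTheory.volume A = ENNReal.ofReal b := by
  apply le_antisymm
  · calc MeasureTheory.volume A ≤ MeasureTheory.volume (Set.Ioc 0 b) := measure_mono h2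
      _ = ENNReal.ofReal b := by rw [Real.volume_Ioc, sub_zero]
  · calc ENNReal.ofReal b = MeasureTheory.volume (Set.Ioo 0 b) := by rw [Real.volume_Ioo, sub_zero]
      _ ≤ MeasureTheory.volume A := measure_mono h1

lemma rearr_eq_vol {X Y : Type*} (R : Set X → Set Y)
    (hRmono : ∀ E F : Set X, E ⊆ F → R E ⊆ R F) (f : X → ℝ) (y : Y) :
    rearr R f y = MeasureTheory.volume ({t : ℝ | y ∈ R {x | t < |f x|}} ∩ Set.Ioi 0) := by
  set S : Set ℝ := {t : ℝ | y ∈ R {x | t < |f x|}} with hSdef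
  have hSmono : ∀ ⦃s t : ℝ⦄, s ≤ t → t ∈ S → s ∈ S := by
    intro s t hst ht
    exact hRmono _ _ (fun x hx => lt_of_le_of_lt hst hx) ht
  have hmeas : MeasurableSet (S ∩ Set.Ioi 0) := by
    rcases classify_lower S hSmono with hc | ⟨b, hb, h1, h2⟩
    · rw [hc]; exact measurableSet_Ioi
    · have heq : S ∩ Set.Ioi 0 = Set.Ioo 0 b ∪ ((S ∩ Set.Ioi 0) \ Set.Ioo 0 b) :=
        (Set.union_diff_cancel h1).symm
      rw [heq]
      refine measurableSet_Ioo.union (Set.Countable.measurableSet ?_)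
      refine (Set.countable_singleton b).mono ?_
      rintro t ⟨htA, htn⟩
      have := h2 htA
      have : t = b := le_antisymm this.2 (by
        by_contra hlt
        exact htn ⟨this.1, lt_of_le_of_ne this.2 (fun hh => hlt (hh ▸ le_rfl))⟩)
      exact this
  have hcong : ∀ t ∈ Set.Ioi (0:ℝ),
      (R {x | t < |f x|}).indicator (fun _ => (1 : ℝ≥0∞)) y
        = (S ∩ Set.Ioi 0).indicator (fun _ => (1 : ℝ≥0∞)) t := by
    intro t ht
    by_cases hy : y ∈ R {x | t < |f x|}
    · rw [Set.indicator_of_mem hy, Set.indicator_of_mem (Set.mem_inter (show t ∈ S from hy) ht)]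
    · rw [Set.indicator_of_notMem hy, Set.indicator_of_notMem (fun hmem => hy hmem.1)]
  unfold rearr
  rw [setLIntegral_congr_fun measurableSet_Ioi hcong,
    lintegral_indicator hmeas, setLIntegral_one, MeasureTheory.Measure.restrict_apply hmeas,
    Set.inter_assoc, Set.inter_self]

lemma rearr_rpow {X Y : Type*} (R : Set X → Set Y)
    (hRmono : ∀ E F : Set X, E ⊆ F → R E ⊆ R F) (p : ℝ) (hp0 : 0 < p) (φ : X → ℝ) (y : Y) :
    rearr R (fun x => |φ x| ^ p) y = rearr R φ y ^ p := by
  have hpne : p ≠ 0 := ne_of_gt hp0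
  rw [rearr_eq_vol R hRmono φ y, rearr_eq_vol R hRmono (fun x => |φ x| ^ p) y]
  set S : Set ℝ := {t : ℝ | y ∈ R {x | t < |φ x|}} with hSdef
  set T : Set ℝ := {t : ℝ | y ∈ R {x | t < |(fun x => |φ x| ^ p) x|}} with hTdef
  have hSmono : ∀ ⦃s t : ℝ⦄, s ≤ t → t ∈ S → s ∈ S := by
    intro s t hst ht
    exact hRmono _ _ (fun x hx => lt_of_le_of_lt hst hx) ht
  have hiff : ∀ t : ℝ, 0 < t → (t ∈ T ↔ t ^ (1/p) ∈ S) := by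
    intro t ht
    have hset : {x | t < |(fun x => |φ x| ^ p) x|} = {x | t ^ (1/p) < |φ x|} := by
      ext x
      simp only [Set.mem_setOf_eq, abs_of_nonneg (Real.rpow_nonneg (abs_nonneg (φ x)) p)]
      constructor
      · intro h
        have h2 := Real.rpow_lt_rpow ht.le h (by positivity : (0:ℝ) < 1/p)
        rwa [← Real.rpow_mul (abs_nonneg (φ x)), mul_one_div_cancel hpne, Real.rpow_one] at h2
      · intro h
        have h2 := Real.rpow_lt_rpow (Real.rpow_nonneg ht.le _) h hp0
        rwa [← Real.rpow_mul ht.le, one_div_mul_cancel hpne, Real.rpow_one] at h2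
    show y ∈ R {x | t < |(fun x => |φ x| ^ p) x|} ↔ y ∈ R {x | t ^ (1/p) < |φ x|}
    rw [hset]
  rcases classify_lower S hSmono with hc | ⟨b, hb, h1, h2⟩
  · have hT : T ∩ Set.Ioi 0 = Set.Ioi 0 := by
      ext t
      constructor
      · exact fun ht => ht.2
      · intro ht
        have htp : t ^ (1/p) ∈ Set.Ioi (0:ℝ) := Real.rpow_pos_of_pos ht _
        have : t ^ (1/p) ∈ S ∩ Set.Ioi 0 := by rw [hc]; exact htp
        exact ⟨(hiff t ht).mpr this.1, ht⟩
    rw [hc, hT, Real.volume_Ioi, ENNReal.top_rpow_of_pos hp0]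
  · have e1 : MeasureTheory.volume (S ∩ Set.Ioi 0) = ENNReal.ofReal b := by
      exact vol_squeeze h1 h2
    have hbp : (0:ℝ) ≤ b ^ p := Real.rpow_nonneg hb p
    have h1' : Set.Ioo 0 (b ^ p) ⊆ T ∩ Set.Ioi 0 := by
      rintro t ⟨ht0, htb⟩
      have h2' := Real.rpow_lt_rpow ht0.le htb (by positivity : (0:ℝ) < 1/p)
      rw [← Real.rpow_mul hb, mul_one_div_cancel hpne, Real.rpow_one] at h2'
      have htp0 : (0:ℝ) < t ^ (1/p) := Real.rpow_pos_of_pos ht0 _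
      have : t ^ (1/p) ∈ S ∩ Set.Ioi 0 := h1 ⟨htp0, h2'⟩
      exact ⟨(hiff t ht0).mpr this.1, ht0⟩
    have h2' : T ∩ Set.Ioi 0 ⊆ Set.Ioc 0 (b ^ p) := by
      rintro t ⟨htT, ht0⟩
      have htp0 : (0:ℝ) < t ^ (1/p) := Real.rpow_pos_of_pos ht0 _
      have hmem : t ^ (1/p) ∈ S ∩ Set.Ioi 0 := ⟨(hiff t ht0).mp htT, htp0⟩
      have hle : t ^ (1/p) ≤ b := (h2 hmem).2
      have := Real.rpow_le_rpow htp0.le hle hp0.le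
      rw [← Real.rpow_mul ht0.le, one_div_mul_cancel hpne, Real.rpow_one] at this
      exact ⟨ht0, this⟩
    rw [e1, vol_squeeze h1' h2', ← ENNReal.ofReal_rpow_of_nonneg hb hp0.le]

theorem stmt13 {X Y : Type*} [MeasurableSpace X] [MeasurableSpace Y]
    (μ : Measure X) (ν : Measure Y)
    (R : Set X → Set Y)
    (hRmono : ∀ E F : Set X, E ⊆ F → R E ⊆ R F) (hR0 : ν (R ∅) = 0)
    (v : Y → ℝ≥0∞)
    (hvrearr : ∃ h₀ : X → ℝ, Measurable h₀ ∧ rearr R h₀ = v)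
    (p : ℝ) (hp : 1 ≤ p)
    (hsat : ∀ f : X → ℝ, Measurable f →
      (⨆ (h : X → ℝ) (_ : Measurable h) (_ : rearr R h = v),
          ∫⁻ x, ENNReal.ofReal |f x * h x| ∂μ)
        = ∫⁻ y, rearr R f y * v y ∂ν) :
    ∀ f g : X → ℝ, Measurable f → Measurable g →
      lorentzNorm R ν v p (f + g)
        ≤ lorentzNorm R ν v p f + lorentzNorm R ν v p g := by
  intro f g hf hg
  have hp0 : 0 < p := lt_of_lt_of_le one_pos hp
  have hpne : p ≠ 0 := ne_of_gt hp0
  have hkey : ∀ φ : X → ℝ, ∫⁻ y, rearr R φ y ^ p * v y ∂ν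
      = ∫⁻ y, rearr R (fun x => |φ x| ^ p) y * v y ∂ν := by
    intro φ
    refine lintegral_congr fun y => ?_
    rw [rearr_rpow R hRmono p hp0]
  have hbound : ∀ (φ : X → ℝ), Measurable φ → ∀ (h : X → ℝ), Measurable h → rearr R h = v →
      ∫⁻ x, ENNReal.ofReal (|(|φ x| ^ p) * h x|) ∂μ ≤ ∫⁻ y, rearr R φ y ^ p * v y ∂ν := by
    intro φ hφ h hh hhv
    rw [hkey φ, ← hsat (fun x => |φ x| ^ p) (hφ.abs.pow_const p)]
    exact le_iSup_of_le h (le_iSup_of_le hh (le_iSup_of_le hhv le_rfl))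
  suffices hP : ∫⁻ y, rearr R (f + g) y ^ p * v y ∂ν
      ≤ (lorentzNorm R ν v p f + lorentzNorm R ν v p g) ^ p by
    show (∫⁻ y, rearr R (f + g) y ^ p * v y ∂ν) ^ (1/p)
        ≤ lorentzNorm R ν v p f + lorentzNorm R ν v p g
    calc (∫⁻ y, rearr R (f + g) y ^ p * v y ∂ν) ^ (1/p)
        ≤ ((lorentzNorm R ν v p f + lorentzNorm R ν v p g) ^ p) ^ (1/p) :=
          ENNReal.rpow_le_rpow hP (by positivity)
      _ = lorentzNorm R ν v p f + lorentzNorm R ν v p g := by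
          rw [one_div, ENNReal.rpow_rpow_inv hpne]
  rw [hkey (f + g), ← hsat (fun x => |(f + g) x| ^ p) ((hf.add hg).abs.pow_const p)]
  refine iSup_le fun h => iSup_le fun hh => iSup_le fun hhv => ?_
  set w : X → ℝ≥0∞ := fun x => ENNReal.ofReal |h x| with hw
  have hwm : Measurable w := hh.abs.ennreal_ofReal
  set μ' := μ.withDensity w with hμ'
  have hA : ∀ (φ : X → ℝ), Measurable φ →
      ∫⁻ x, (ENNReal.ofReal |φ x|) ^ p ∂μ' = ∫⁻ x, ENNReal.ofReal (|(|φ x| ^ p) * h x|) ∂μ := by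
    intro φ hφ
    rw [hμ', lintegral_withDensity_eq_lintegral_mul μ hwm (hφ.abs.ennreal_ofReal.pow_const p)]
    refine lintegral_congr fun x => ?_
    have hnn : (0:ℝ) ≤ |φ x| ^ p := Real.rpow_nonneg (abs_nonneg _) p
    simp only [Pi.mul_apply, hw]
    rw [abs_mul, abs_of_nonneg hnn, ENNReal.ofReal_mul hnn,
      ← ENNReal.ofReal_rpow_of_nonneg (abs_nonneg (φ x)) hp0.le, mul_comm]
  have hNf : (∫⁻ x, (ENNReal.ofReal |f x|) ^ p ∂μ') ^ (1/p) ≤ lorentzNorm R ν v p f := by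
    refine ENNReal.rpow_le_rpow ?_ (by positivity)
    rw [hA f hf]
    exact hbound f hf h hh hhv
  have hNg : (∫⁻ x, (ENNReal.ofReal |g x|) ^ p ∂μ') ^ (1/p) ≤ lorentzNorm R ν v p g := by
    refine ENNReal.rpow_le_rpow ?_ (by positivity)
    rw [hA g hg]
    exact hbound g hg h hh hhv
  have step3 := ENNReal.lintegral_Lp_add_le (μ := μ')
    (f := fun x => ENNReal.ofReal |f x|) (g := fun x => ENNReal.ofReal |g x|)
    hf.abs.ennreal_ofReal.aemeasurable hg.abs.ennreal_ofReal.aemeasurable hp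
  simp only [Pi.add_apply] at step3
  show ∫⁻ x, ENNReal.ofReal (|(|f x + g x| ^ p) * h x|) ∂μ
      ≤ (lorentzNorm R ν v p f + lorentzNorm R ν v p g) ^ p
  calc ∫⁻ x, ENNReal.ofReal (|(|f x + g x| ^ p) * h x|) ∂μ
      = ∫⁻ x, (ENNReal.ofReal |f x + g x|) ^ p ∂μ' := (hA (f + g) (hf.add hg)).symm
    _ ≤ ∫⁻ x, (ENNReal.ofReal |f x| + ENNReal.ofReal |g x|) ^ p ∂μ' := by
        refine lintegral_mono fun x => ENNReal.rpow_le_rpow ?_ hp0.le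
        rw [← ENNReal.ofReal_add (abs_nonneg _) (abs_nonneg _)]
        exact ENNReal.ofReal_le_ofReal (abs_add_le _ _)
    _ = ((∫⁻ x, (ENNReal.ofReal |f x| + ENNReal.ofReal |g x|) ^ p ∂μ') ^ (1/p)) ^ p := by
        rw [one_div, ENNReal.rpow_inv_rpow hpne]
    _ ≤ (lorentzNorm R ν v p f + lorentzNorm R ν v p g) ^ p := by
        refine ENNReal.rpow_le_rpow ?_ hp0.le
        exact le_trans step3 (add_le_add hNf hNg)
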